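/- arXiv:1410.1415 — 2 statements merged into one kernel-verified Lean document; each statement's English description precedes it below -/
import Mathlib

section
/- For the phase function φ(ξ) = (x/t)·ξ - ξ₁/|ξ| on ℝ² \ {0} (with x ∈ ℝ² and t > 0 fixed), the determinant of the Hessian matrix of φ with respect to ξ equals -ξ₂²/|ξ|⁶. -/
/-- First partial derivative (in the first variable) of a two-variable function. -/
noncomputable def pd1 (f : ℝ → ℝ → ℝ) : ℝ → ℝ → ℝ := fun a b => deriv (fun u => f u b) a

/-- Second partial derivative (in the second variable) of a two-variable function. -/
noncomputable def pd2 (f : ℝ → ℝ → ℝ) : ℝ → ℝ → ℝ := fun a b => deriv (fun v => f a v) b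

private lemma hs_sqrt (c u : ℝ) (h : 0 < u ^ 2 + c) :
    HasDerivAt (fun u : ℝ => Real.sqrt (u ^ 2 + c)) (u / Real.sqrt (u ^ 2 + c)) u := by
  have h1 : HasDerivAt (fun u : ℝ => u ^ 2 + c) (2 * u) u := by
    simpa using (hasDerivAt_pow 2 u).add_const c
  have h2 := (Real.hasDerivAt_sqrt h.ne').comp u h1
  refine h2.congr_deriv (Eq.symm ?_)
  field_simp

private lemma pow_facts (a b : ℝ) (h : 0 < a ^ 2 + b ^ 2) :
    Real.sqrt (a ^ 2 + b ^ 2) ^ 2 = a ^ 2 + b ^ 2 ∧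
    Real.sqrt (a ^ 2 + b ^ 2) ^ 3 = (a ^ 2 + b ^ 2) * Real.sqrt (a ^ 2 + b ^ 2) ∧
    Real.sqrt (a ^ 2 + b ^ 2) ^ 4 = (a ^ 2 + b ^ 2) ^ 2 ∧
    Real.sqrt (a ^ 2 + b ^ 2) ^ 5 = (a ^ 2 + b ^ 2) ^ 2 * Real.sqrt (a ^ 2 + b ^ 2) ∧
    Real.sqrt (a ^ 2 + b ^ 2) ^ 6 = (a ^ 2 + b ^ 2) ^ 3 ∧
    Real.sqrt (a ^ 2 + b ^ 2) ^ 7 = (a ^ 2 + b ^ 2) ^ 3 * Real.sqrt (a ^ 2 + b ^ 2) ∧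
    Real.sqrt (a ^ 2 + b ^ 2) ^ 8 = (a ^ 2 + b ^ 2) ^ 4 ∧
    Real.sqrt (a ^ 2 + b ^ 2) ^ 9 = (a ^ 2 + b ^ 2) ^ 4 * Real.sqrt (a ^ 2 + b ^ 2) ∧
    Real.sqrt (a ^ 2 + b ^ 2) ^ 10 = (a ^ 2 + b ^ 2) ^ 5 ∧
    Real.sqrt (a ^ 2 + b ^ 2) ^ 11 = (a ^ 2 + b ^ 2) ^ 5 * Real.sqrt (a ^ 2 + b ^ 2) ∧
    Real.sqrt (a ^ 2 + b ^ 2) ^ 12 = (a ^ 2 + b ^ 2) ^ 6 ∧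
    Real.sqrt (a ^ 2 + b ^ 2) ^ 13 = (a ^ 2 + b ^ 2) ^ 6 * Real.sqrt (a ^ 2 + b ^ 2) ∧
    Real.sqrt (a ^ 2 + b ^ 2) ^ 14 = (a ^ 2 + b ^ 2) ^ 7 ∧
    Real.sqrt (a ^ 2 + b ^ 2) ^ 15 = (a ^ 2 + b ^ 2) ^ 7 * Real.sqrt (a ^ 2 + b ^ 2) ∧
    Real.sqrt (a ^ 2 + b ^ 2) ^ 16 = (a ^ 2 + b ^ 2) ^ 8 := by
  have h2 : Real.sqrt (a ^ 2 + b ^ 2) ^ 2 = a ^ 2 + b ^ 2 := Real.sq_sqrt h.le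
  set s := Real.sqrt (a ^ 2 + b ^ 2) with hs
  refine ⟨h2, ?_, ?_, ?_, ?_, ?_, ?_, ?_, ?_, ?_, ?_, ?_, ?_, ?_, ?_⟩
  · rw [show s ^ 3 = s ^ 2 * s by ring, h2]
  · rw [show s ^ 4 = (s ^ 2) ^ 2 by ring, h2]
  · rw [show s ^ 5 = (s ^ 2) ^ 2 * s by ring, h2]
  · rw [show s ^ 6 = (s ^ 2) ^ 3 by ring, h2]
  · rw [show s ^ 7 = (s ^ 2) ^ 3 * s by ring, h2]
  · rw [show s ^ 8 = (s ^ 2) ^ 4 by ring, h2]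
  · rw [show s ^ 9 = (s ^ 2) ^ 4 * s by ring, h2]
  · rw [show s ^ 10 = (s ^ 2) ^ 5 by ring, h2]
  · rw [show s ^ 11 = (s ^ 2) ^ 5 * s by ring, h2]
  · rw [show s ^ 12 = (s ^ 2) ^ 6 by ring, h2]
  · rw [show s ^ 13 = (s ^ 2) ^ 6 * s by ring, h2]
  · rw [show s ^ 14 = (s ^ 2) ^ 7 by ring, h2]
  · rw [show s ^ 15 = (s ^ 2) ^ 7 * s by ring, h2]
  · rw [show s ^ 16 = (s ^ 2) ^ 8 by ring, h2]

-- first partial derivative in a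
private lemma d1 (x1 x2 t b a : ℝ) (h : 0 < a ^ 2 + b ^ 2) :
    HasDerivAt (fun u : ℝ => (x1 * u + x2 * b) / t - u / Real.sqrt (u ^ 2 + b ^ 2))
      (x1 / t - b ^ 2 / (Real.sqrt (a ^ 2 + b ^ 2)) ^ 3) a := by
  have hspos : 0 < Real.sqrt (a ^ 2 + b ^ 2) := Real.sqrt_pos.mpr h
  have hsq : Real.sqrt (a ^ 2 + b ^ 2) ^ 2 = a ^ 2 + b ^ 2 := Real.sq_sqrt h.le
  have hlin : HasDerivAt (fun u : ℝ => (x1 * u + x2 * b) / t) (x1 / t) a := by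
    simpa using (((hasDerivAt_id a).const_mul x1).add_const (x2 * b)).div_const t
  have hdiv := (hasDerivAt_id a).div (hs_sqrt (b ^ 2) a h) hspos.ne'
  have := hlin.sub hdiv
  refine this.congr_deriv (Eq.symm ?_)
  field_simp
  simp only [id]; linear_combination hsq

-- first partial derivative in b
private lemma d2 (x1 x2 t a b : ℝ) (h : 0 < a ^ 2 + b ^ 2) :
    HasDerivAt (fun v : ℝ => (x1 * a + x2 * v) / t - a / Real.sqrt (a ^ 2 + v ^ 2))
      (x2 / t + a * b / (Real.sqrt (a ^ 2 + b ^ 2)) ^ 3) b := by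
  have h' : 0 < b ^ 2 + a ^ 2 := by linarith
  have hspos : 0 < Real.sqrt (a ^ 2 + b ^ 2) := Real.sqrt_pos.mpr h
  obtain ⟨p2, p3, p4, p5, p6, p7, p8, p9, p10, p11, p12, p13, p14, p15, p16⟩ := pow_facts a b h
  have hlin : HasDerivAt (fun v : ℝ => (x1 * a + x2 * v) / t) (x2 / t) b := by
    simpa using ((((hasDerivAt_id b).const_mul x2).const_add (x1 * a))).div_const t
  have hsq' : HasDerivAt (fun v : ℝ => Real.sqrt (a ^ 2 + v ^ 2))
      (b / Real.sqrt (a ^ 2 + b ^ 2)) b := by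
    have := hs_sqrt (a ^ 2) b h'
    simpa [add_comm] using this
  have hdiv := (hasDerivAt_const b a).div hsq' hspos.ne'
  have := hlin.sub hdiv
  refine this.congr_deriv (Eq.symm ?_)
  field_simp
  try ring_nf
  try simp only [add_comm (b ^ 2) (a ^ 2)]
  try simp only [p2, p3, p4, p5, p6, p7, p8, p9, p10, p11, p12, p13, p14, p15, p16]
  try ring

-- second derivatives: helper for cube of sqrt
private lemma hs_cube (a b : ℝ) (h : 0 < a ^ 2 + b ^ 2) :
    HasDerivAt (fun u : ℝ => (Real.sqrt (u ^ 2 + b ^ 2)) ^ 3)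
      (3 * a * Real.sqrt (a ^ 2 + b ^ 2)) a := by
  have hsq : Real.sqrt (a ^ 2 + b ^ 2) ^ 2 = a ^ 2 + b ^ 2 := Real.sq_sqrt h.le
  have hspos : 0 < Real.sqrt (a ^ 2 + b ^ 2) := Real.sqrt_pos.mpr h
  have := (hs_sqrt (b ^ 2) a h).pow 3
  refine this.congr_deriv (Eq.symm ?_)
  field_simp
  linear_combination

private lemma hs_cube' (a b : ℝ) (h : 0 < a ^ 2 + b ^ 2) :
    HasDerivAt (fun v : ℝ => (Real.sqrt (a ^ 2 + v ^ 2)) ^ 3)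
      (3 * b * Real.sqrt (a ^ 2 + b ^ 2)) b := by
  have h' : 0 < b ^ 2 + a ^ 2 := by linarith
  have := hs_cube b a h'
  simp only [add_comm (b ^ 2) (a ^ 2)] at this
  convert this using 2 <;> rw [add_comm]

private lemma d11 (x1 t a b : ℝ) (h : 0 < a ^ 2 + b ^ 2) :
    HasDerivAt (fun u : ℝ => x1 / t - b ^ 2 / (Real.sqrt (u ^ 2 + b ^ 2)) ^ 3)
      (3 * a * b ^ 2 / (Real.sqrt (a ^ 2 + b ^ 2)) ^ 5) a := by
  have hspos : 0 < Real.sqrt (a ^ 2 + b ^ 2) := Real.sqrt_pos.mpr h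
  obtain ⟨p2, p3, p4, p5, p6, p7, p8, p9, p10, p11, p12, p13, p14, p15, p16⟩ := pow_facts a b h
  have hcube3 : ((Real.sqrt (a ^ 2 + b ^ 2)) ^ 3) ≠ 0 := by positivity
  have hdiv := (hasDerivAt_const a (b ^ 2)).div (hs_cube a b h) hcube3
  have := (hasDerivAt_const a (x1 / t)).sub hdiv
  refine this.congr_deriv (Eq.symm ?_)
  field_simp
  try ring_nf
  try simp only [add_comm (b ^ 2) (a ^ 2)]
  try simp only [p2, p3, p4, p5, p6, p7, p8, p9, p10, p11, p12, p13, p14, p15, p16]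
  try ring

private lemma d21 (x1 t a b : ℝ) (h : 0 < a ^ 2 + b ^ 2) :
    HasDerivAt (fun v : ℝ => x1 / t - v ^ 2 / (Real.sqrt (a ^ 2 + v ^ 2)) ^ 3)
      (b * (b ^ 2 - 2 * a ^ 2) / (Real.sqrt (a ^ 2 + b ^ 2)) ^ 5) b := by
  have hspos : 0 < Real.sqrt (a ^ 2 + b ^ 2) := Real.sqrt_pos.mpr h
  obtain ⟨p2, p3, p4, p5, p6, p7, p8, p9, p10, p11, p12, p13, p14, p15, p16⟩ := pow_facts a b h
  have hcube3 : ((Real.sqrt (a ^ 2 + b ^ 2)) ^ 3) ≠ 0 := by positivity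
  have hb2 : HasDerivAt (fun v : ℝ => v ^ 2) (2 * b) b := by simpa using hasDerivAt_pow 2 b
  have hdiv := hb2.div (hs_cube' a b h) hcube3
  have := (hasDerivAt_const b (x1 / t)).sub hdiv
  refine this.congr_deriv (Eq.symm ?_)
  field_simp
  try ring_nf
  try simp only [add_comm (b ^ 2) (a ^ 2)]
  try simp only [p2, p3, p4, p5, p6, p7, p8, p9, p10, p11, p12, p13, p14, p15, p16]
  try ring

private lemma d12 (x2 t a b : ℝ) (h : 0 < a ^ 2 + b ^ 2) :
    HasDerivAt (fun u : ℝ => x2 / t + u * b / (Real.sqrt (u ^ 2 + b ^ 2)) ^ 3)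
      (b * (b ^ 2 - 2 * a ^ 2) / (Real.sqrt (a ^ 2 + b ^ 2)) ^ 5) a := by
  have hspos : 0 < Real.sqrt (a ^ 2 + b ^ 2) := Real.sqrt_pos.mpr h
  obtain ⟨p2, p3, p4, p5, p6, p7, p8, p9, p10, p11, p12, p13, p14, p15, p16⟩ := pow_facts a b h
  have hcube3 : ((Real.sqrt (a ^ 2 + b ^ 2)) ^ 3) ≠ 0 := by positivity
  have hnum : HasDerivAt (fun u : ℝ => u * b) b a := by simpa using (hasDerivAt_id a).mul_const b
  have hdiv := hnum.div (hs_cube a b h) hcube3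
  have := hdiv.const_add (x2 / t)
  refine this.congr_deriv (Eq.symm ?_)
  field_simp
  try ring_nf
  try simp only [add_comm (b ^ 2) (a ^ 2)]
  try simp only [p2, p3, p4, p5, p6, p7, p8, p9, p10, p11, p12, p13, p14, p15, p16]
  try ring

private lemma d22 (x2 t a b : ℝ) (h : 0 < a ^ 2 + b ^ 2) :
    HasDerivAt (fun v : ℝ => x2 / t + a * v / (Real.sqrt (a ^ 2 + v ^ 2)) ^ 3)
      (a * (a ^ 2 - 2 * b ^ 2) / (Real.sqrt (a ^ 2 + b ^ 2)) ^ 5) b := by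
  have hspos : 0 < Real.sqrt (a ^ 2 + b ^ 2) := Real.sqrt_pos.mpr h
  obtain ⟨p2, p3, p4, p5, p6, p7, p8, p9, p10, p11, p12, p13, p14, p15, p16⟩ := pow_facts a b h
  have hcube3 : ((Real.sqrt (a ^ 2 + b ^ 2)) ^ 3) ≠ 0 := by positivity
  have hnum : HasDerivAt (fun v : ℝ => a * v) a b := by simpa using (hasDerivAt_id b).const_mul a
  have hdiv := hnum.div (hs_cube' a b h) hcube3
  have := hdiv.const_add (x2 / t)
  refine this.congr_deriv (Eq.symm ?_)
  field_simp
  try ring_nf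
  try simp only [add_comm (b ^ 2) (a ^ 2)]
  try simp only [p2, p3, p4, p5, p6, p7, p8, p9, p10, p11, p12, p13, p14, p15, p16]
  try ring

/-- For the phase `φ(ξ) = (x·ξ)/t - ξ₁/|ξ|` on `ℝ² \ {0}` (with `x ∈ ℝ²`, `t > 0` fixed),
the determinant of the Hessian of `φ` in `ξ` equals `-ξ₂²/|ξ|⁶`. -/
theorem hessian_det_phase (x1 x2 t : ℝ) (ht : 0 < t) (ξ1 ξ2 : ℝ) (hξ : ¬(ξ1 = 0 ∧ ξ2 = 0)) :
    let φ : ℝ → ℝ → ℝ := fun a b => (x1 * a + x2 * b) / t - a / Real.sqrt (a ^ 2 + b ^ 2)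
    pd1 (pd1 φ) ξ1 ξ2 * pd2 (pd2 φ) ξ1 ξ2 - pd1 (pd2 φ) ξ1 ξ2 * pd2 (pd1 φ) ξ1 ξ2
      = -(ξ2 ^ 2) / (Real.sqrt (ξ1 ^ 2 + ξ2 ^ 2)) ^ 6 := by
  intro φ
  have hpos : 0 < ξ1 ^ 2 + ξ2 ^ 2 := by
    rcases not_and_or.mp hξ with h | h <;> positivity
  have hcont1 : Continuous (fun u : ℝ => u ^ 2 + ξ2 ^ 2) := by continuity
  have hcont2 : Continuous (fun v : ℝ => ξ1 ^ 2 + v ^ 2) := by continuity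
  have hopen1 : ∀ᶠ u in nhds ξ1, 0 < u ^ 2 + ξ2 ^ 2 :=
    hcont1.continuousAt.eventually (eventually_gt_nhds hpos)
  have hopen2 : ∀ᶠ v in nhds ξ2, 0 < ξ1 ^ 2 + v ^ 2 :=
    hcont2.continuousAt.eventually (eventually_gt_nhds hpos)
  have e1 : ∀ a b : ℝ, 0 < a ^ 2 + b ^ 2 →
      pd1 φ a b = x1 / t - b ^ 2 / (Real.sqrt (a ^ 2 + b ^ 2)) ^ 3 :=
    fun a b h => (d1 x1 x2 t b a h).deriv
  have e2 : ∀ a b : ℝ, 0 < a ^ 2 + b ^ 2 →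
      pd2 φ a b = x2 / t + a * b / (Real.sqrt (a ^ 2 + b ^ 2)) ^ 3 :=
    fun a b h => (d2 x1 x2 t a b h).deriv
  have h11 : pd1 (pd1 φ) ξ1 ξ2 = 3 * ξ1 * ξ2 ^ 2 / (Real.sqrt (ξ1 ^ 2 + ξ2 ^ 2)) ^ 5 := by
    have heq : (fun u => pd1 φ u ξ2) =ᶠ[nhds ξ1]
        (fun u => x1 / t - ξ2 ^ 2 / (Real.sqrt (u ^ 2 + ξ2 ^ 2)) ^ 3) :=
      hopen1.mono fun u hu => e1 u ξ2 hu
    calc pd1 (pd1 φ) ξ1 ξ2 = deriv (fun u => pd1 φ u ξ2) ξ1 := rfl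
      _ = deriv (fun u => x1 / t - ξ2 ^ 2 / (Real.sqrt (u ^ 2 + ξ2 ^ 2)) ^ 3) ξ1 := heq.deriv_eq
      _ = _ := (d11 x1 t ξ1 ξ2 hpos).deriv
  have h21 : pd2 (pd1 φ) ξ1 ξ2
      = ξ2 * (ξ2 ^ 2 - 2 * ξ1 ^ 2) / (Real.sqrt (ξ1 ^ 2 + ξ2 ^ 2)) ^ 5 := by
    have heq : (fun v => pd1 φ ξ1 v) =ᶠ[nhds ξ2]
        (fun v => x1 / t - v ^ 2 / (Real.sqrt (ξ1 ^ 2 + v ^ 2)) ^ 3) :=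
      hopen2.mono fun v hv => e1 ξ1 v hv
    calc pd2 (pd1 φ) ξ1 ξ2 = deriv (fun v => pd1 φ ξ1 v) ξ2 := rfl
      _ = deriv (fun v => x1 / t - v ^ 2 / (Real.sqrt (ξ1 ^ 2 + v ^ 2)) ^ 3) ξ2 := heq.deriv_eq
      _ = _ := (d21 x1 t ξ1 ξ2 hpos).deriv
  have h12 : pd1 (pd2 φ) ξ1 ξ2
      = ξ2 * (ξ2 ^ 2 - 2 * ξ1 ^ 2) / (Real.sqrt (ξ1 ^ 2 + ξ2 ^ 2)) ^ 5 := by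
    have heq : (fun u => pd2 φ u ξ2) =ᶠ[nhds ξ1]
        (fun u => x2 / t + u * ξ2 / (Real.sqrt (u ^ 2 + ξ2 ^ 2)) ^ 3) :=
      hopen1.mono fun u hu => e2 u ξ2 hu
    calc pd1 (pd2 φ) ξ1 ξ2 = deriv (fun u => pd2 φ u ξ2) ξ1 := rfl
      _ = deriv (fun u => x2 / t + u * ξ2 / (Real.sqrt (u ^ 2 + ξ2 ^ 2)) ^ 3) ξ1 := heq.deriv_eq
      _ = _ := (d12 x2 t ξ1 ξ2 hpos).deriv
  have h22 : pd2 (pd2 φ) ξ1 ξ2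
      = ξ1 * (ξ1 ^ 2 - 2 * ξ2 ^ 2) / (Real.sqrt (ξ1 ^ 2 + ξ2 ^ 2)) ^ 5 := by
    have heq : (fun v => pd2 φ ξ1 v) =ᶠ[nhds ξ2]
        (fun v => x2 / t + ξ1 * v / (Real.sqrt (ξ1 ^ 2 + v ^ 2)) ^ 3) :=
      hopen2.mono fun v hv => e2 ξ1 v hv
    calc pd2 (pd2 φ) ξ1 ξ2 = deriv (fun v => pd2 φ ξ1 v) ξ2 := rfl
      _ = deriv (fun v => x2 / t + ξ1 * v / (Real.sqrt (ξ1 ^ 2 + v ^ 2)) ^ 3) ξ2 := heq.deriv_eq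
      _ = _ := (d22 x2 t ξ1 ξ2 hpos).deriv
  rw [h11, h21, h12, h22]
  have hspos : 0 < Real.sqrt (ξ1 ^ 2 + ξ2 ^ 2) := Real.sqrt_pos.mpr hpos
  obtain ⟨p2, p3, p4, p5, p6, p7, p8, p9, p10, p11, p12, p13, p14, p15, p16⟩ :=
    pow_facts ξ1 ξ2 hpos
  field_simp
  try ring_nf
  try simp only [add_comm (ξ2 ^ 2) (ξ1 ^ 2)]
  try simp only [p2, p3, p4, p5, p6, p7, p8, p9, p10, p11, p12, p13, p14, p15, p16]
  try ring
end

section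
/- If f : ℝ² → ℂ is a Schwartz function whose Fourier transform f̂ is radial (i.e. f̂(ξ) depends only on |ξ|), then the value of e^{R₁t}f at the origin is f(0) · (1/2π) ∫₀^{2π} e^{-it cos θ} dθ, where e^{R₁t}f(x) = ∫_{ℝ²} f̂(ξ) e^{i x·ξ - it ξ₁/|ξ|} dξ (with Fourier conventions such that f(x) = ∫ f̂(ξ)e^{ix·ξ}dξ). -/
open MeasureTheory Complex

/-- If `f : ℝ² → ℂ` is a Schwartz function whose Fourier transform `f̂` (convention
`f̂(ξ) = (2π)⁻² ∫ f(x) e^{-ix·ξ} dx`, so that `f(x) = ∫ f̂(ξ) e^{ix·ξ} dξ`) is radial,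
then `e^{R₁t}f(0) = ∫ f̂(ξ) e^{-itξ₁/|ξ|} dξ = f(0) · (1/(2π)) ∫₀^{2π} e^{-it cos θ} dθ`. -/
theorem semigroup_at_origin_radial (f : SchwartzMap (ℝ × ℝ) ℂ) (t : ℝ)
    (fhat : ℝ × ℝ → ℂ)
    (hfhat : ∀ ξ : ℝ × ℝ,
      fhat ξ = ((2 * Real.pi : ℝ) : ℂ) ^ (-2 : ℤ) *
        ∫ x : ℝ × ℝ, f x * Complex.exp (-(Complex.I * (x.1 * ξ.1 + x.2 * ξ.2))))
    (hradial : ∀ ξ η : ℝ × ℝ, ξ.1 ^ 2 + ξ.2 ^ 2 = η.1 ^ 2 + η.2 ^ 2 → fhat ξ = fhat η)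
    (hinv : ∀ x : ℝ × ℝ,
      f x = ∫ ξ : ℝ × ℝ, fhat ξ * Complex.exp (Complex.I * (x.1 * ξ.1 + x.2 * ξ.2))) :
    (∫ ξ : ℝ × ℝ, fhat ξ *
        Complex.exp (-(Complex.I * t * ξ.1 / Real.sqrt (ξ.1 ^ 2 + ξ.2 ^ 2))))
      = f 0 * (1 / (2 * Real.pi : ℝ) : ℝ) *
        ∫ θ in (0 : ℝ)..(2 * Real.pi), Complex.exp (-(Complex.I * t * Real.cos θ)) := by
  have hπ : (2 * Real.pi : ℝ) ≠ 0 := by positivity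
  set g : ℝ → ℂ := fun r => fhat (r, 0) with hgdef
  -- general polar-coordinates computation
  have polar : ∀ (φ : ℝ × ℝ → ℂ) (ψ : ℝ → ℂ),
      (∀ r θ : ℝ, 0 < r → φ (r * Real.cos θ, r * Real.sin θ) = ψ θ) →
      (∫ ξ : ℝ × ℝ, fhat ξ * φ ξ)
        = (∫ r in Set.Ioi (0:ℝ), (r:ℂ) * g r) *
          ∫ θ in Set.Ioo (-Real.pi) Real.pi, ψ θ := by
    intro φ ψ hφ
    rw [← integral_comp_polarCoord_symm (fun ξ => fhat ξ * φ ξ)]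
    have htarget : polarCoord.target = Set.Ioi (0:ℝ) ×ˢ Set.Ioo (-Real.pi) Real.pi := rfl
    have hmeas : MeasurableSet polarCoord.target :=
      (measurableSet_Ioi.prod measurableSet_Ioo)
    have hcongr : ∀ p ∈ polarCoord.target,
        p.1 • (fhat (polarCoord.symm p) * φ (polarCoord.symm p))
          = ((p.1:ℂ) * g p.1) * ψ p.2 := by
      rintro ⟨r, θ⟩ hp
      have hr : 0 < r := hp.1
      have hsymm : polarCoord.symm (r, θ) = (r * Real.cos θ, r * Real.sin θ) := rfl
      have hrad : fhat (r * Real.cos θ, r * Real.sin θ) = g r := by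
        apply hradial
        have : Real.sin θ ^ 2 + Real.cos θ ^ 2 = 1 := Real.sin_sq_add_cos_sq θ
        simp only
        nlinarith [this]
      rw [hsymm, hrad, hφ r θ hr, Complex.real_smul]
      ring
    rw [setIntegral_congr_fun hmeas hcongr, htarget]
    rw [show (volume : Measure (ℝ × ℝ)) = (volume : Measure ℝ).prod volume from
      (MeasureTheory.Measure.volume_eq_prod ℝ ℝ)]
    exact setIntegral_prod_mul (fun r : ℝ => (r:ℂ) * g r) ψ _ _
  -- compute f 0
  have hf0 : f 0 = (∫ r in Set.Ioi (0:ℝ), (r:ℂ) * g r) * (2 * Real.pi : ℝ) := by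
    have h1 : f 0 = ∫ ξ : ℝ × ℝ, fhat ξ * (fun _ : ℝ × ℝ => (1:ℂ)) ξ := by
      rw [hinv 0]
      simp
    rw [h1, polar (fun _ => (1:ℂ)) (fun _ => (1:ℂ)) (fun _ _ _ => rfl)]
    congr 1
    rw [setIntegral_const,
      Real.volume_real_Ioo_of_le (by linarith [Real.pi_pos]), Complex.real_smul, mul_one]
    push_cast
    ring
  -- compute the LHS
  have hLHS : (∫ ξ : ℝ × ℝ, fhat ξ *
        Complex.exp (-(Complex.I * t * ξ.1 / Real.sqrt (ξ.1 ^ 2 + ξ.2 ^ 2))))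
      = (∫ r in Set.Ioi (0:ℝ), (r:ℂ) * g r) *
        ∫ θ in Set.Ioo (-Real.pi) Real.pi, Complex.exp (-(Complex.I * t * Real.cos θ)) := by
    apply polar
    intro r θ hr
    have hsq : (r * Real.cos θ) ^ 2 + (r * Real.sin θ) ^ 2 = r ^ 2 := by
      have := Real.sin_sq_add_cos_sq θ
      nlinarith
    simp only
    rw [hsq, Real.sqrt_sq hr.le]
    congr 1
    have hr' : (r : ℂ) ≠ 0 := by exact_mod_cast hr.ne'
    push_cast
    field_simp
  -- the interval integral over [0, 2π] equals the one over Ioo (-π, π)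
  have hper : Function.Periodic
      (fun θ : ℝ => Complex.exp (-(Complex.I * t * Real.cos θ))) (2 * Real.pi) := by
    intro x
    simp [Real.cos_add_two_pi]
  have hint : (∫ θ in (0:ℝ)..(2 * Real.pi), Complex.exp (-(Complex.I * t * Real.cos θ)))
      = ∫ θ in Set.Ioo (-Real.pi) Real.pi, Complex.exp (-(Complex.I * t * Real.cos θ)) := by
    have h1 := hper.intervalIntegral_add_eq (0 : ℝ) (-Real.pi)
    have h2 : -Real.pi + 2 * Real.pi = Real.pi := by ring
    rw [zero_add, h2] at h1
    rw [h1, intervalIntegral.integral_of_le (by linarith [Real.pi_pos]),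
      ← MeasureTheory.integral_Ioc_eq_integral_Ioo]
  rw [hLHS, hf0, hint]
  have hπℂ : (Real.pi : ℂ) ≠ 0 := Complex.ofReal_ne_zero.mpr Real.pi_ne_zero
  push_cast
  field_simp
end
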